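/- Let k^{a₁…a_ℓ} be a Killing ℓ-tensor on ℝ^n. Then every partial derivative of order ℓ+1 of every component of k vanishes identically: ∂_{b₀}∂_{b₁}⋯∂_{b_ℓ} k^{a₁…a_ℓ} = 0 for all indices b₀,…,b_ℓ, a₁,…,a_ℓ. Equivalently, each component of k is a polynomial function of degree at most ℓ. -/

import Mathlib

noncomputable section

/-- Partial derivative `∂_a f` in the `a`-th coordinate direction on `ℝⁿ`. -/
def pd {n : ℕ} (a : Fin n) (f : (Fin n → ℝ) → ℝ) : (Fin n → ℝ) → ℝ :=
  fun x => fderiv ℝ f x (Pi.single a 1)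

/-- Raised partial derivative `∂^a f = g^{ab} ∂_b f`. -/
def pdUp {n : ℕ} (ginv : Matrix (Fin n) (Fin n) ℝ) (a : Fin n)
    (f : (Fin n → ℝ) → ℝ) : (Fin n → ℝ) → ℝ :=
  fun x => ∑ b, ginv a b * pd b f x

/-- Laplace operator `Δ f = g^{ab} ∂_a ∂_b f`. -/
def lap {n : ℕ} (ginv : Matrix (Fin n) (Fin n) ℝ) (f : (Fin n → ℝ) → ℝ) :
    (Fin n → ℝ) → ℝ :=
  fun x => ∑ a, ∑ b, ginv a b * pd a (pd b f) x

/-- Iterated partial derivative `∂_{i 0} ⋯ ∂_{i (m-1)} f` along a tuple of indices. -/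
def pdIter {n : ℕ} : (m : ℕ) → (Fin m → Fin n) → ((Fin n → ℝ) → ℝ) → ((Fin n → ℝ) → ℝ)
  | 0, _, f => f
  | m + 1, i, f => pd (i 0) (pdIter m (fun j => i j.succ) f)

/-- A (smooth, totally symmetric) Killing `ℓ`-tensor: `∂^{(a₀} k^{a₁…a_ℓ)} = 0`. -/
def IsKillingTensor {n : ℕ} (ginv : Matrix (Fin n) (Fin n) ℝ) (ℓ : ℕ)
    (k : (Fin ℓ → Fin n) → (Fin n → ℝ) → ℝ) : Prop :=
  (∀ i, ContDiff ℝ (⊤ : ℕ∞) (k i)) ∧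
  (∀ (σ : Equiv.Perm (Fin ℓ)) (i : Fin ℓ → Fin n), k (i ∘ σ) = k i) ∧
  (∀ (i : Fin (ℓ + 1) → Fin n) (x : Fin n → ℝ),
    ∑ σ : Equiv.Perm (Fin (ℓ + 1)),
      pdUp ginv (i (σ 0)) (k (fun j => i (σ j.succ))) x = 0)

end

noncomputable section Aux
open Finset
variable {n : ℕ}

local notation "Sm" => ContDiff ℝ (⊤:ℕ∞)

lemma sm_fderiv {f : (Fin n → ℝ) → ℝ} (hf : Sm f) :
    ContDiff ℝ (⊤:ℕ∞) (fderiv ℝ f) := hf.fderiv_right (by simp)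

lemma sm_pd {f : (Fin n → ℝ) → ℝ} (hf : Sm f) (a : Fin n) : Sm (pd a f) := by
  have h1 : ContDiff ℝ (⊤:ℕ∞) (fderiv ℝ f) := hf.fderiv_right (by simp)
  exact (ContinuousLinearMap.apply ℝ ℝ (Pi.single a 1)).contDiff.comp h1

lemma sm_diff {F : Type*} [NormedAddCommGroup F] [NormedSpace ℝ F]
    {f : (Fin n → ℝ) → F} (hf : ContDiff ℝ (⊤:ℕ∞) f) : Differentiable ℝ f :=
  hf.differentiable (by simp)

lemma pd_sum {ι : Type*} (s : Finset ι) (F : ι → (Fin n → ℝ) → ℝ)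
    (hF : ∀ i ∈ s, Differentiable ℝ (F i)) (a : Fin n) :
    pd a (fun x => ∑ i ∈ s, F i x) = fun x => ∑ i ∈ s, pd a (F i) x := by
  funext x
  simp only [pd]
  rw [fderiv_fun_sum (fun i hi => (hF i hi).differentiableAt)]
  simp

lemma pd_add {f g : (Fin n → ℝ) → ℝ} (hf : Differentiable ℝ f) (hg : Differentiable ℝ g)
    (a : Fin n) : pd a (fun x => f x + g x) = fun x => pd a f x + pd a g x := by
  funext x
  simp only [pd]
  rw [fderiv_fun_add hf.differentiableAt hg.differentiableAt]
  simp

lemma pd_const_mul (c : ℝ) {f : (Fin n → ℝ) → ℝ} (hf : Differentiable ℝ f) (a : Fin n) :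
    pd a (fun x => c * f x) = fun x => c * pd a f x := by
  funext x
  simp only [pd]
  rw [fderiv_const_mul hf.differentiableAt c]
  simp

lemma pd_zero (a : Fin n) : pd a (fun _ => (0:ℝ)) = fun _ => 0 := by
  funext x; simp only [pd]; rw [fderiv_fun_const]; simp

lemma fderiv_eq_sum {f : (Fin n → ℝ) → ℝ} (x v : Fin n → ℝ) :
    fderiv ℝ f x v = ∑ b, v b * pd b f x := by
  have hv : v = ∑ b, Pi.single b (v b) := by
    rw [Finset.univ_sum_single]
  conv_lhs => rw [hv]
  rw [map_sum]
  refine Finset.sum_congr rfl fun b _ => ?_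
  have : Pi.single b (v b) = (v b) • (Pi.single b 1 : Fin n → ℝ) := by
    funext j; by_cases h : j = b <;> simp [Pi.single_apply, h]
  rw [this, map_smul, smul_eq_mul]; rfl

/-- Schwarz symmetry of second partials for smooth functions. -/
lemma pd_pd_comm {f : (Fin n → ℝ) → ℝ} (hf : Sm f) (a b : Fin n) :
    pd a (pd b f) = pd b (pd a f) := by
  have key : ∀ (c d : Fin n) (x : Fin n → ℝ),
      pd c (pd d f) x = fderiv ℝ (fderiv ℝ f) x (Pi.single c 1) (Pi.single d 1) := by
    intro c d x
    have hdiff : DifferentiableAt ℝ (fderiv ℝ f) x :=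
      (sm_diff (sm_fderiv hf)) x
    have : pd d f = fun y => (fderiv ℝ f y) (Pi.single d 1) := rfl
    rw [this]
    show fderiv ℝ (fun y => (fderiv ℝ f y) (Pi.single d 1)) x (Pi.single c 1) = _
    rw [fderiv_clm_apply hdiff (differentiableAt_const _)]
    simp
  funext x
  rw [key a b x, key b a x]
  have hdiffall : ∀ y, HasFDerivAt f (fderiv ℝ f y) y := fun y =>
    ((sm_diff hf) y).hasFDerivAt
  have hdiff : DifferentiableAt ℝ (fderiv ℝ f) x :=
    (sm_diff (sm_fderiv hf)) x
  exact second_derivative_symmetric hdiffall hdiff.hasFDerivAt _ _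

lemma pdIter_succ (m : ℕ) (i : Fin (m+1) → Fin n) (f : (Fin n → ℝ) → ℝ) :
    pdIter (m+1) i f = pd (i 0) (pdIter m (fun j => i j.succ) f) := rfl

lemma sm_pdIter {f : (Fin n → ℝ) → ℝ} (hf : Sm f) :
    ∀ (m : ℕ) (b : Fin m → Fin n), Sm (pdIter m b f)
  | 0, _ => hf
  | m+1, b => sm_pd (sm_pdIter hf m _) _

lemma pdIter_sum {ι : Type*} (s : Finset ι) (F : ι → (Fin n → ℝ) → ℝ)
    (hF : ∀ i ∈ s, Sm (F i)) :
    ∀ (m : ℕ) (b : Fin m → Fin n),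
      pdIter m b (fun x => ∑ i ∈ s, F i x) = fun x => ∑ i ∈ s, pdIter m b (F i) x
  | 0, _ => rfl
  | m+1, b => by
    rw [pdIter_succ, pdIter_sum s F hF m _, pd_sum s _
      (fun i hi => sm_diff (sm_pdIter (hF i hi) m _))]
    funext x
    exact Finset.sum_congr rfl fun i hi => rfl

lemma pdIter_const_mul (c : ℝ) {f : (Fin n → ℝ) → ℝ} (hf : Sm f) :
    ∀ (m : ℕ) (b : Fin m → Fin n),
      pdIter m b (fun x => c * f x) = fun x => c * pdIter m b f x
  | 0, _ => rfl
  | m+1, b => by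
    rw [pdIter_succ, pdIter_const_mul c hf m _, pd_const_mul c (sm_diff (sm_pdIter hf m _))]
    rfl

lemma pdIter_zero_fun : ∀ (m : ℕ) (b : Fin m → Fin n),
      pdIter m b (fun _ => (0:ℝ)) = fun _ => 0
  | 0, _ => rfl
  | m+1, b => by rw [pdIter_succ, pdIter_zero_fun m _, pd_zero]

lemma pdIter_cons (m : ℕ) (a : Fin n) (b : Fin m → Fin n) (f : (Fin n → ℝ) → ℝ) :
    pdIter (m+1) (Fin.cons a b) f = pd a (pdIter m b f) := by
  rw [pdIter_succ]
  have h1 : (Fin.cons a b : Fin (m+1) → Fin n) 0 = a := rfl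
  have h2 : (fun j : Fin m => (Fin.cons a b : Fin (m+1) → Fin n) j.succ) = b := by
    funext j; simp
  rw [h1, h2]

lemma pdIter_two (m : ℕ) (c : Fin (m+2) → Fin n) (f : (Fin n → ℝ) → ℝ) :
    pdIter (m+2) c f
      = pd (c 0) (pd (c (Fin.succ 0)) (pdIter m (fun r => c r.succ.succ) f)) := rfl

/-- invariance of iterated partials under a transposition of indices -/
lemma pdIter_swap {f : (Fin n → ℝ) → ℝ} (hf : Sm f) :
    ∀ (m : ℕ) (p q : Fin m) (b : Fin m → Fin n),
      pdIter m (b ∘ Equiv.swap p q) f = pdIter m b f := by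
  intro m
  induction m with
  | zero => exact fun p => p.elim0
  | succ m IH =>
    -- swapping two successor indices
    have hsucc : ∀ (i j : Fin m) (b : Fin (m+1) → Fin n),
        pdIter (m+1) (b ∘ Equiv.swap i.succ j.succ) f = pdIter (m+1) b f := by
      intro i j b
      have h0 : (b ∘ Equiv.swap i.succ j.succ) 0 = b 0 := by
        simp only [Function.comp_apply]
        rw [Equiv.swap_apply_of_ne_of_ne (Fin.succ_ne_zero i).symm (Fin.succ_ne_zero j).symm]
      have ht : (fun r => (b ∘ Equiv.swap i.succ j.succ) (Fin.succ r))
          = (fun r => b r.succ) ∘ Equiv.swap i j := by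
        funext r
        simp only [Function.comp_apply]
        congr 1
        exact (Fin.succ_injective m).swap_apply i j r
      rw [pdIter_succ, pdIter_succ, h0, ht, IH i j _]
    -- swapping the first two indices
    have h01 : ∀ (hq : (0:ℕ) < m) (b : Fin (m+1) → Fin n),
        pdIter (m+1) (b ∘ Equiv.swap 0 ⟨1, Nat.succ_lt_succ hq⟩) f = pdIter (m+1) b f := by
      intro hq b
      match m, hq with
      | m'+1, _ =>
        have e1 : (⟨1, by omega⟩ : Fin (m'+2)) = Fin.succ 0 := rfl
        rw [e1, pdIter_two, pdIter_two]
        have c0 : (b ∘ Equiv.swap 0 (Fin.succ 0)) 0 = b (Fin.succ 0) := by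
          simp only [Function.comp_apply, Equiv.swap_apply_left]
        have c1 : (b ∘ Equiv.swap 0 (Fin.succ 0)) (Fin.succ 0) = b 0 := by
          simp only [Function.comp_apply, Equiv.swap_apply_right]
        have ct : (fun r : Fin m' => (b ∘ Equiv.swap 0 (Fin.succ 0)) r.succ.succ)
            = fun r : Fin m' => b r.succ.succ := by
          funext r
          show b (Equiv.swap 0 (Fin.succ 0) r.succ.succ) = b r.succ.succ
          congr 1
          all_goals exact Equiv.swap_apply_of_ne_of_ne (Fin.succ_ne_zero _) (fun h => Fin.succ_ne_zero r.succ ((Fin.succ_injective _) h))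
        rw [c0, c1, ct, pd_pd_comm (sm_pdIter hf m' _)]
    -- swapping 0 with an arbitrary nonzero index
    have h0s : ∀ (s : Fin (m+1)), s ≠ 0 → ∀ (b : Fin (m+1) → Fin n),
        pdIter (m+1) (b ∘ Equiv.swap 0 s) f = pdIter (m+1) b f := by
      intro s hs b
      rcases Fin.eq_zero_or_eq_succ s with h | ⟨s', hs'⟩
      · exact absurd h hs
      have hm : (0:ℕ) < m := by
        rcases Nat.eq_zero_or_pos m with h0 | hp
        · subst h0; exact s'.elim0
        · exact hp
      set one : Fin (m+1) := ⟨1, Nat.succ_lt_succ hm⟩ with hone_def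
      by_cases hone : s = one
      · subst hone; exact h01 hm b
      · have key : Equiv.swap (0:Fin (m+1)) s
            = Equiv.swap one 0 * Equiv.swap s one * Equiv.swap one 0 :=
          (Equiv.swap_mul_swap_mul_swap (fun h => hone h) hs).symm
        have hcomp : b ∘ Equiv.swap (0:Fin (m+1)) s
            = ((b ∘ Equiv.swap one 0) ∘ Equiv.swap s one) ∘ Equiv.swap one 0 := by
          funext r
          simp only [Function.comp_apply, key, Equiv.Perm.mul_apply]
        have hswap10 : ∀ (b' : Fin (m+1) → Fin n),
            pdIter (m+1) (b' ∘ Equiv.swap one 0) f = pdIter (m+1) b' f := by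
          intro b'
          rw [Equiv.swap_comm]
          exact h01 hm b'
        have hone_succ : one = Fin.succ ⟨0, hm⟩ := by
          simp [hone_def, Fin.ext_iff]
        rw [hcomp, hswap10]
        have hstep : (b ∘ ⇑(Equiv.swap one 0)) ∘ ⇑(Equiv.swap s one)
            = (b ∘ ⇑(Equiv.swap one 0)) ∘ ⇑(Equiv.swap s'.succ (Fin.succ ⟨0, hm⟩)) := by
          rw [← hs', ← hone_succ]
        rw [hstep, hsucc, hswap10]
    intro p q b
    rcases Fin.eq_zero_or_eq_succ p with hp | ⟨p', hp⟩ <;>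
      rcases Fin.eq_zero_or_eq_succ q with hq | ⟨q', hq⟩
    · subst hp; subst hq
      rw [Equiv.swap_self]
      rfl
    · subst hp; subst hq
      exact h0s _ (Fin.succ_ne_zero q') b
    · subst hp; subst hq
      rw [Equiv.swap_comm]
      exact h0s _ (Fin.succ_ne_zero p') b
    · subst hp; subst hq
      exact hsucc p' q' b

/-- invariance of iterated partials under arbitrary permutations of the indices. -/
lemma pdIter_perm {f : (Fin n → ℝ) → ℝ} (hf : Sm f) (m : ℕ) (σ : Equiv.Perm (Fin m))
    (b : Fin m → Fin n) : pdIter m (b ∘ σ) f = pdIter m b f := by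
  have main : ∀ (σ : Equiv.Perm (Fin m)) (b : Fin m → Fin n),
      pdIter m (b ∘ σ) f = pdIter m b f := by
    intro σ
    refine Equiv.Perm.swap_induction_on
      (motive := fun σ => ∀ b : Fin m → Fin n, pdIter m (b ∘ σ) f = pdIter m b f) σ
      (fun b => by
        have : b ∘ ⇑(1 : Equiv.Perm (Fin m)) = b := funext fun r => rfl
        rw [this])
      (fun τ x y hxy hτ b => by
        have : b ∘ ⇑(Equiv.swap x y * τ) = (b ∘ Equiv.swap x y) ∘ τ := by
          funext r; simp [Equiv.Perm.mul_apply]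
        rw [this, hτ, pdIter_swap hf m x y b])
  exact main σ b

/-- directional derivative as a sum of partials -/
def Dv {n : ℕ} (v : Fin n → ℝ) (f : (Fin n → ℝ) → ℝ) : (Fin n → ℝ) → ℝ :=
  fun x => ∑ b, v b * pd b f x

def DvIter {n : ℕ} : ℕ → (Fin n → ℝ) → ((Fin n → ℝ) → ℝ) → ((Fin n → ℝ) → ℝ)
  | 0, _, f => f
  | m+1, v, f => Dv v (DvIter m v f)

lemma Dv_eq_fderiv {v : Fin n → ℝ} {f : (Fin n → ℝ) → ℝ} (x : Fin n → ℝ) :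
    Dv v f x = fderiv ℝ f x v := (fderiv_eq_sum x v).symm

lemma sm_Dv {f : (Fin n → ℝ) → ℝ} (hf : Sm f) (v : Fin n → ℝ) : Sm (Dv v f) :=
  ContDiff.sum fun b _ => contDiff_const.mul (sm_pd hf b)

lemma sm_DvIter {f : (Fin n → ℝ) → ℝ} (hf : Sm f) (v : Fin n → ℝ) :
    ∀ m, Sm (DvIter m v f)
  | 0 => hf
  | m+1 => sm_Dv (sm_DvIter hf v m) v

lemma Dv_zero_fun (v : Fin n → ℝ) : Dv v (fun _ => (0:ℝ)) = fun _ => 0 := by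
  funext x
  simp [Dv, pd_zero]

lemma Dv_add {f g : (Fin n → ℝ) → ℝ} (hf : Differentiable ℝ f) (hg : Differentiable ℝ g)
    (v : Fin n → ℝ) : Dv v (fun x => f x + g x) = fun x => Dv v f x + Dv v g x := by
  funext x
  simp only [Dv, pd_add hf hg]
  rw [← Finset.sum_add_distrib]
  exact Finset.sum_congr rfl fun b _ => by ring

lemma Dv_sum {ι : Type*} (s : Finset ι) (F : ι → (Fin n → ℝ) → ℝ)
    (hF : ∀ i ∈ s, Differentiable ℝ (F i)) (v : Fin n → ℝ) :
    Dv v (fun x => ∑ i ∈ s, F i x) = fun x => ∑ i ∈ s, Dv v (F i) x := by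
  funext x
  simp only [Dv, pd_sum s F hF]
  rw [Finset.sum_comm]
  simp [Finset.mul_sum]

lemma Dv_const_mul (c : ℝ) {f : (Fin n → ℝ) → ℝ} (hf : Differentiable ℝ f) (v : Fin n → ℝ) :
    Dv v (fun x => c * f x) = fun x => c * Dv v f x := by
  funext x
  simp only [Dv, pd_const_mul c hf]
  rw [Finset.mul_sum]
  exact Finset.sum_congr rfl fun b _ => by ring

lemma Dv_comm {f : (Fin n → ℝ) → ℝ} (hf : Sm f) (u w : Fin n → ℝ) :
    Dv u (Dv w f) = Dv w (Dv u f) := by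
  have expand : ∀ (u w : Fin n → ℝ) (x : Fin n → ℝ),
      Dv u (Dv w f) x = ∑ a, ∑ b, u a * w b * pd a (pd b f) x := by
    intro u w x
    simp only [Dv]
    have : ∀ a : Fin n, pd a (Dv w f) x
        = ∑ b, w b * pd a (pd b f) x := by
      intro a
      show pd a (fun y => ∑ b, w b * pd b f y) x = _
      rw [pd_sum Finset.univ (fun b => fun y => w b * pd b f y)
        (fun b _ => (contDiff_const.mul (sm_pd hf b)).differentiable (by simp))]
      exact Finset.sum_congr rfl fun b _ => by
        rw [pd_const_mul (w b) (sm_diff (sm_pd hf b))]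
    refine Finset.sum_congr rfl fun a _ => ?_
    rw [this a, Finset.mul_sum]
    exact Finset.sum_congr rfl fun b _ => by ring
  funext x
  rw [expand u w x, expand w u x, Finset.sum_comm]
  refine Finset.sum_congr rfl fun a _ => Finset.sum_congr rfl fun b _ => ?_
  rw [pd_pd_comm hf a b]
  ring

lemma DvIter_succ' (m : ℕ) (v : Fin n → ℝ) (f : (Fin n → ℝ) → ℝ) :
    DvIter (m+1) v f = DvIter m v (Dv v f) := by
  induction m with
  | zero => rfl
  | succ m IH =>
    show Dv v (DvIter (m+1) v f) = Dv v (DvIter m v (Dv v f))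
    rw [IH]

lemma DvIter_zero_fun (m : ℕ) (v : Fin n → ℝ) :
    DvIter m v (fun _ => (0:ℝ)) = fun _ => 0 := by
  induction m with
  | zero => rfl
  | succ m IH => show Dv v (DvIter m v _) = _; rw [IH, Dv_zero_fun]

lemma DvIter_add {f g : (Fin n → ℝ) → ℝ} (hf : Sm f) (hg : Sm g) (m : ℕ) (v : Fin n → ℝ) :
    DvIter m v (fun x => f x + g x) = fun x => DvIter m v f x + DvIter m v g x := by
  induction m with
  | zero => rfl
  | succ m IH =>
    show Dv v (DvIter m v _) = _
    rw [IH, Dv_add (sm_diff (sm_DvIter hf v m)) (sm_diff (sm_DvIter hg v m))]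
    rfl

lemma DvIter_Dv_comm {f : (Fin n → ℝ) → ℝ} (hf : Sm f) (m : ℕ) (u w : Fin n → ℝ) :
    DvIter m w (Dv u f) = Dv u (DvIter m w f) := by
  induction m with
  | zero => rfl
  | succ m IH =>
    show Dv w (DvIter m w (Dv u f)) = Dv u (Dv w (DvIter m w f))
    rw [IH, Dv_comm (sm_DvIter hf w m) w u]

lemma DvIter_expand {f : (Fin n → ℝ) → ℝ} (hf : Sm f) (m : ℕ) (v : Fin n → ℝ)
    (x : Fin n → ℝ) :
    DvIter m v f x = ∑ b : Fin m → Fin n, (∏ j, v (b j)) * pdIter m b f x := by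
  induction m generalizing x with
  | zero =>
    rw [Fintype.sum_unique]
    simp [DvIter, pdIter]
  | succ m IH =>
    show Dv v (DvIter m v f) x = _
    have hfn : DvIter m v f = fun y => ∑ b : Fin m → Fin n, (∏ j, v (b j)) * pdIter m b f y :=
      funext fun y => IH y
    rw [Dv, hfn]
    have : ∀ a : Fin n,
        pd a (fun y => ∑ b : Fin m → Fin n, (∏ j, v (b j)) * pdIter m b f y) x
        = ∑ b : Fin m → Fin n, (∏ j, v (b j)) * pdIter (m+1) (Fin.cons a b) f x := by
      intro a
      rw [pd_sum Finset.univ _ (fun b _ =>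
        ((contDiff_const.mul (sm_pdIter hf m b)).differentiable (by simp)))]
      refine Finset.sum_congr rfl fun b _ => ?_
      rw [pd_const_mul _ (sm_diff (sm_pdIter hf m b)), ← pdIter_cons]
    calc ∑ a, v a * pd a (fun y => ∑ b : Fin m → Fin n, (∏ j, v (b j)) * pdIter m b f y) x
        = ∑ a, ∑ b : Fin m → Fin n, v a * ((∏ j, v (b j)) * pdIter (m+1) (Fin.cons a b) f x) := by
          refine Finset.sum_congr rfl fun a _ => ?_
          rw [this a, Finset.mul_sum]
      _ = ∑ p : Fin n × (Fin m → Fin n), (∏ j, v ((Fin.cons p.1 p.2 : Fin (m+1) → Fin n) j))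
            * pdIter (m+1) (Fin.cons p.1 p.2) f x := by
          rw [Fintype.sum_prod_type]
          refine Finset.sum_congr rfl fun a _ => Finset.sum_congr rfl fun b _ => ?_
          rw [Fin.prod_univ_succ]
          simp [mul_assoc]
      _ = ∑ c : Fin (m+1) → Fin n, (∏ j, v (c j)) * pdIter (m+1) c f x := by
          exact Fintype.sum_equiv (Fin.consEquiv (fun _ => Fin n))
            _ _ (fun p => rfl)

/-- the exponent multiset of a tuple -/
def expOf {n m : ℕ} (i : Fin m → Fin n) : Fin n →₀ ℕ := ∑ j, Finsupp.single (i j) 1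

lemma expOf_apply {m : ℕ} (i : Fin m → Fin n) (v : Fin n) :
    expOf i v = (Finset.univ.filter (fun j => i j = v)).card := by
  rw [expOf, Finset.sum_apply']
  rw [Finset.card_filter]
  refine Finset.sum_congr rfl fun j _ => ?_
  rw [Finsupp.single_apply]

lemma tuple_perm_of_expOf_eq {m : ℕ} {i i₀ : Fin m → Fin n}
    (h : expOf i = expOf i₀) : ∃ σ : Equiv.Perm (Fin m), i₀ = i ∘ σ := by
  have hcard : ∀ v : Fin n,
      Fintype.card {j // i₀ j = v} = Fintype.card {j // i j = v} := by
    intro v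
    rw [Fintype.card_subtype, Fintype.card_subtype]
    have h1 := expOf_apply i v
    have h2 := expOf_apply i₀ v
    rw [h] at h1
    omega
  have e : ∀ v : Fin n, {j // i₀ j = v} ≃ {j // i j = v} :=
    fun v => Fintype.equivOfCardEq (hcard v)
  refine ⟨Equiv.ofFiberEquiv e, funext fun j => ?_⟩
  exact (Equiv.ofFiberEquiv_map e j).symm

/-- monomial expansion of products of variables -/
lemma prod_X_eq_monomial {m : ℕ} (i : Fin m → Fin n) :
    (∏ j, (MvPolynomial.X (i j) : MvPolynomial (Fin n) ℝ))
      = MvPolynomial.monomial (expOf i) 1 := by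
  rw [expOf]
  induction (Finset.univ : Finset (Fin m)) using Finset.induction_on with
  | empty => simp
  | insert _ _ hj IH =>
    rw [Finset.prod_insert hj, Finset.sum_insert hj, IH]
    rw [MvPolynomial.X, MvPolynomial.monomial_mul, one_mul]

/-- Polarization: a symmetric array whose full contraction with `v^{⊗m}` vanishes for all `v`
vanishes. -/
lemma polarization {m : ℕ} (T : (Fin m → Fin n) → ℝ)
    (hsym : ∀ (σ : Equiv.Perm (Fin m)) (i : Fin m → Fin n), T (i ∘ σ) = T i)
    (h : ∀ v : Fin n → ℝ, ∑ i : Fin m → Fin n, (∏ j, v (i j)) * T i = 0) :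
    ∀ i, T i = 0 := by
  intro i₀
  classical
  set p : MvPolynomial (Fin n) ℝ :=
    ∑ i : Fin m → Fin n, MvPolynomial.C (T i) * ∏ j, MvPolynomial.X (i j) with hp
  have hev : ∀ v : Fin n → ℝ, MvPolynomial.eval v p = 0 := by
    intro v
    rw [hp, map_sum]
    rw [← h v]
    refine Finset.sum_congr rfl fun i _ => ?_
    simp [mul_comm]
  have hp0 : p = 0 := by
    apply MvPolynomial.funext
    intro v
    rw [hev v]
    simp
  have hcoeff : MvPolynomial.coeff (expOf i₀) p = 0 := by rw [hp0]; simp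
  rw [hp] at hcoeff
  rw [MvPolynomial.coeff_sum] at hcoeff
  have hterm : ∀ i : Fin m → Fin n,
      MvPolynomial.coeff (expOf i₀) (MvPolynomial.C (T i) * ∏ j, MvPolynomial.X (i j))
        = if expOf i = expOf i₀ then T i₀ else 0 := by
    intro i
    rw [prod_X_eq_monomial, MvPolynomial.coeff_C_mul, MvPolynomial.coeff_monomial]
    by_cases hie : expOf i = expOf i₀
    · rw [if_pos hie, if_pos hie, mul_one]
      obtain ⟨σ, hσ⟩ := tuple_perm_of_expOf_eq hie
      rw [hσ, hsym]
    · rw [if_neg hie, if_neg hie, mul_zero]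
  rw [Finset.sum_congr rfl (fun i _ => hterm i)] at hcoeff
  have hcoeff2 : ((Finset.univ.filter
      (fun i : Fin m → Fin n => expOf i = expOf i₀)).card : ℝ) * T i₀ = 0 := by
    rw [← hcoeff, Finset.sum_ite, Finset.sum_const_zero, add_zero, Finset.sum_const,
      nsmul_eq_mul]
  have hmem : i₀ ∈ Finset.univ.filter (fun i : Fin m → Fin n => expOf i = expOf i₀) := by
    simp
  have hcpos : 0 < (Finset.univ.filter (fun i : Fin m → Fin n => expOf i = expOf i₀)).card :=
    Finset.card_pos.mpr ⟨i₀, hmem⟩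
  rcases mul_eq_zero.mp hcoeff2 with hc | hT
  · exact absurd hc (by positivity)
  · exact hT

section Killing
variable {ℓ : ℕ} (ginv : Matrix (Fin n) (Fin n) ℝ)
  (k : (Fin ℓ → Fin n) → (Fin n → ℝ) → ℝ)

/-- full contraction of `k` with `u^{⊗ℓ}` -/
def Pc (u : Fin n → ℝ) : (Fin n → ℝ) → ℝ :=
  fun x => ∑ i : Fin ℓ → Fin n, (∏ j, u (i j)) * k i x

/-- index raising applied to a vector -/
def gt (u : Fin n → ℝ) : Fin n → ℝ := fun b => ∑ a, u a * ginv a b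

lemma sm_Pc (hk1 : ∀ i, Sm (k i)) (u : Fin n → ℝ) : Sm (Pc k u) :=
  ContDiff.sum fun i _ => contDiff_const.mul (hk1 i)

lemma pd_Pc (hk1 : ∀ i, Sm (k i)) (u : Fin n → ℝ) (b : Fin n) (x : Fin n → ℝ) :
    pd b (Pc k u) x = ∑ i : Fin ℓ → Fin n, (∏ j, u (i j)) * pd b (k i) x := by
  have h1 : pd b (Pc k u) = pd b (fun y => ∑ i : Fin ℓ → Fin n,
      (fun i => fun y => (∏ j, u (i j)) * k i y) i y) := rfl
  rw [h1, pd_sum Finset.univ _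
    (fun i _ => (contDiff_const.mul (hk1 i)).differentiable (by simp))]
  exact Finset.sum_congr rfl fun i _ => by
    rw [pd_const_mul _ (sm_diff (hk1 i))]

/-- the contracted Killing equation -/
lemma killing_contract (hk : IsKillingTensor ginv ℓ k) (u : Fin n → ℝ) (x : Fin n → ℝ) :
    Dv (gt ginv u) (Pc k u) x = 0 := by
  classical
  set G : (Fin (ℓ+1) → Fin n) → ℝ := fun i =>
    (∏ j, u (i j)) * pdUp ginv (i 0) (k fun j => i j.succ) x with hG
  -- sum over permutations all equal
  have hσ : ∀ σ : Equiv.Perm (Fin (ℓ+1)),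
      (∑ i : Fin (ℓ+1) → Fin n,
        (∏ j, u (i j)) * pdUp ginv (i (σ 0)) (k fun j => i (σ j.succ)) x)
      = ∑ i : Fin (ℓ+1) → Fin n, G i := by
    intro σ
    rw [← Equiv.sum_comp (Equiv.arrowCongr σ.symm (Equiv.refl (Fin n))) G]
    refine Finset.sum_congr rfl fun i _ => ?_
    have he : (Equiv.arrowCongr σ.symm (Equiv.refl (Fin n))) i = i ∘ σ := rfl
    rw [he]
    show (∏ j, u (i j)) * pdUp ginv (i (σ 0)) (k fun j => i (σ j.succ)) x
      = (∏ j, u ((i ∘ σ) j)) * pdUp ginv ((i ∘ σ) 0) (k fun j => (i ∘ σ) j.succ) x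
    congr 1
    exact (Equiv.prod_comp σ (fun j => u (i j))).symm
  have hsum0 : (∑ i : Fin (ℓ+1) → Fin n, (∏ j, u (i j)) *
      (∑ σ : Equiv.Perm (Fin (ℓ+1)), pdUp ginv (i (σ 0)) (k fun j => i (σ j.succ)) x)) = 0 :=
    Finset.sum_eq_zero fun i _ => by rw [hk.2.2 i x, mul_zero]
  have hswap : (∑ i : Fin (ℓ+1) → Fin n, (∏ j, u (i j)) *
      (∑ σ : Equiv.Perm (Fin (ℓ+1)), pdUp ginv (i (σ 0)) (k fun j => i (σ j.succ)) x))
      = ∑ σ : Equiv.Perm (Fin (ℓ+1)), ∑ i : Fin (ℓ+1) → Fin n,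
        (∏ j, u (i j)) * pdUp ginv (i (σ 0)) (k fun j => i (σ j.succ)) x := by
    rw [Finset.sum_congr rfl (fun i (_ : i ∈ Finset.univ) => Finset.mul_sum
      (Finset.univ : Finset (Equiv.Perm (Fin (ℓ+1)))) _ _)]
    exact Finset.sum_comm
  have hGsum : (∑ i : Fin (ℓ+1) → Fin n, G i) = 0 := by
    have hcard : (Finset.univ : Finset (Equiv.Perm (Fin (ℓ+1)))).card
        • (∑ i : Fin (ℓ+1) → Fin n, G i) = 0 := by
      rw [← Finset.sum_const, Finset.sum_congr rfl (fun σ _ => (hσ σ).symm), ← hswap, hsum0]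
    have hpos : (0:ℝ) < (((Finset.univ : Finset (Equiv.Perm (Fin (ℓ+1)))).card : ℕ) : ℝ) := by
      have := Fintype.card_pos (α := Equiv.Perm (Fin (ℓ+1)))
      rw [Finset.card_univ]
      exact_mod_cast this
    rw [nsmul_eq_mul] at hcard
    rcases mul_eq_zero.mp hcard with hc | hres
    · exact absurd hc (ne_of_gt hpos)
    · exact hres
  -- now rewrite the common value as the directional derivative
  have split : (∑ i : Fin (ℓ+1) → Fin n, G i)
      = ∑ a, ∑ i' : Fin ℓ → Fin n, (u a * ∏ j, u (i' j)) * ∑ b, ginv a b * pd b (k i') x := by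
    rw [← Fintype.sum_equiv (Fin.consEquiv (fun _ => Fin n)) _ G (fun p => rfl)]
    rw [Fintype.sum_prod_type]
    refine Finset.sum_congr rfl fun a _ => Finset.sum_congr rfl fun i' _ => ?_
    show (∏ j, u ((Fin.cons a i' : Fin (ℓ+1) → Fin n) j)) *
        pdUp ginv ((Fin.cons a i' : Fin (ℓ+1) → Fin n) 0)
          (k fun j => (Fin.cons a i' : Fin (ℓ+1) → Fin n) j.succ) x = _
    rw [Fin.prod_univ_succ]
    have h0 : (Fin.cons a i' : Fin (ℓ+1) → Fin n) 0 = a := rfl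
    have hsucc : (fun j => (Fin.cons a i' : Fin (ℓ+1) → Fin n) j.succ) = i' := by
      funext j; simp
    rw [h0, hsucc]
    rfl
  rw [split] at hGsum
  have final : Dv (gt ginv u) (Pc k u) x
      = ∑ a, ∑ i' : Fin ℓ → Fin n, (u a * ∏ j, u (i' j)) * ∑ b, ginv a b * pd b (k i') x := by
    show (∑ b, gt ginv u b * pd b (Pc k u) x) = _
    have lhs : (∑ b, gt ginv u b * pd b (Pc k u) x)
        = ∑ b, ∑ a, ∑ i' : Fin ℓ → Fin n,
          (u a * ginv a b) * ((∏ j, u (i' j)) * pd b (k i') x) := by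
      refine Finset.sum_congr rfl fun b _ => ?_
      rw [pd_Pc k hk.1 u b x]
      show (∑ a, u a * ginv a b) * (∑ i' : Fin ℓ → Fin n, (∏ j, u (i' j)) * pd b (k i') x) = _
      rw [Finset.sum_mul_sum]
    rw [lhs, Finset.sum_comm]
    refine Finset.sum_congr rfl fun a _ => ?_
    rw [Finset.sum_comm]
    refine Finset.sum_congr rfl fun i' _ => ?_
    rw [Finset.mul_sum]
    exact Finset.sum_congr rfl fun b _ => by ring
  rw [final]
  exact hGsum

/-- coefficient array of the expansion of `Pc (u + t w)` in powers of `t` -/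
def coefC (u w : Fin n → ℝ) (m : ℕ) (i : Fin ℓ → Fin n) : ℝ :=
  ∑ S ∈ (Finset.univ : Finset (Fin ℓ)).powerset,
    if S.card = m then (∏ j ∈ S, w (i j)) * ∏ j ∈ Finset.univ \ S, u (i j) else 0

def Qc (u w : Fin n → ℝ) (m : ℕ) : (Fin n → ℝ) → ℝ :=
  fun x => ∑ i : Fin ℓ → Fin n, coefC u w m i * k i x

lemma sm_Qc (hk1 : ∀ i, Sm (k i)) (u w : Fin n → ℝ) (m : ℕ) : Sm (Qc k u w m) :=
  ContDiff.sum fun i _ => contDiff_const.mul (hk1 i)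

lemma Qc_zero (u w : Fin n → ℝ) : Qc k u w 0 = Pc k u := by
  funext x
  refine Finset.sum_congr rfl fun i _ => ?_
  congr 1
  rw [coefC]
  rw [Finset.sum_congr rfl (fun S (_ : S ∈ (Finset.univ : Finset (Fin ℓ)).powerset) => by
    rw [show (if S.card = 0 then (∏ j ∈ S, w (i j)) * ∏ j ∈ Finset.univ \ S, u (i j) else 0)
        = if S = ∅ then (∏ j ∈ S, w (i j)) * ∏ j ∈ Finset.univ \ S, u (i j) else 0 from by
      congr 1
      simp [Finset.card_eq_zero]])]
  rw [Finset.sum_ite_eq' ((Finset.univ : Finset (Fin ℓ)).powerset) (∅ : Finset (Fin ℓ))]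
  simp

lemma Pc_expand (u w : Fin n → ℝ) (t : ℝ) (x : Fin n → ℝ) :
    Pc k (u + t • w) x = ∑ m ∈ Finset.range (ℓ+1), t^m * Qc k u w m x := by
  have rhs : ∑ m ∈ Finset.range (ℓ+1), t^m * Qc k u w m x
      = ∑ i : Fin ℓ → Fin n, (∑ m ∈ Finset.range (ℓ+1), t^m * coefC u w m i) * k i x := by
    show ∑ m ∈ Finset.range (ℓ+1), t^m * (∑ i : Fin ℓ → Fin n, coefC u w m i * k i x) = _
    rw [Finset.sum_congr rfl (fun m (_ : m ∈ Finset.range (ℓ+1)) =>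
      Finset.mul_sum (Finset.univ : Finset (Fin ℓ → Fin n)) (fun i => coefC u w m i * k i x)
        (t^m))]
    rw [Finset.sum_comm]
    refine Finset.sum_congr rfl fun i _ => ?_
    rw [Finset.sum_mul]
    refine Finset.sum_congr rfl fun m _ => by ring
  rw [rhs]
  refine Finset.sum_congr rfl fun i _ => ?_
  congr 1
  have hprod : (∏ j, (u + t • w) (i j)) = ∏ j, (t * w (i j) + u (i j)) := by
    refine Finset.prod_congr rfl fun j _ => ?_
    simp [add_comm]
  rw [hprod, Finset.prod_add]
  have rhs2 : ∑ m ∈ Finset.range (ℓ+1), t^m * coefC u w m i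
      = ∑ S ∈ (Finset.univ : Finset (Fin ℓ)).powerset,
          t^(S.card) * ((∏ j ∈ S, w (i j)) * ∏ j ∈ Finset.univ \ S, u (i j)) := by
    have step1 : ∀ m, t^m * coefC u w m i
        = ∑ S ∈ (Finset.univ : Finset (Fin ℓ)).powerset,
            if S.card = m
            then t^m * ((∏ j ∈ S, w (i j)) * ∏ j ∈ Finset.univ \ S, u (i j)) else 0 := by
      intro m
      rw [coefC, Finset.mul_sum]
      exact Finset.sum_congr rfl fun S _ => by rw [mul_ite, mul_zero]
    rw [Finset.sum_congr rfl fun m _ => step1 m, Finset.sum_comm]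
    refine Finset.sum_congr rfl fun S hS => ?_
    have hc : S.card ∈ Finset.range (ℓ+1) := by
      rw [Finset.mem_range]
      have := Finset.card_le_card (Finset.mem_powerset.mp hS)
      simp only [Finset.card_univ, Fintype.card_fin] at this
      omega
    have heq : ∀ m ∈ Finset.range (ℓ+1),
        (if S.card = m
          then t^m * ((∏ j ∈ S, w (i j)) * ∏ j ∈ Finset.univ \ S, u (i j)) else 0)
        = if S.card = m
          then t^(S.card) * ((∏ j ∈ S, w (i j)) * ∏ j ∈ Finset.univ \ S, u (i j)) else 0 := by
      intro m _
      by_cases h : S.card = m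
      · rw [if_pos h, if_pos h, h]
      · rw [if_neg h, if_neg h]
    rw [Finset.sum_congr rfl heq, Finset.sum_ite_eq (Finset.range (ℓ+1)) S.card, if_pos hc]
  rw [rhs2]
  refine Finset.sum_congr rfl fun S _ => ?_
  rw [Finset.prod_mul_distrib, Finset.prod_const]
  ring

lemma Dv_add_vec (v₁ v₂ : Fin n → ℝ) (c : ℝ) (f : (Fin n → ℝ) → ℝ) (y : Fin n → ℝ) :
    Dv (fun b => v₁ b + c * v₂ b) f y = Dv v₁ f y + c * Dv v₂ f y := by
  simp only [Dv, Finset.mul_sum]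
  rw [← Finset.sum_add_distrib]
  exact Finset.sum_congr rfl fun b _ => by ring

/-- main analytic step: the (ℓ+1)-st directional derivative of the contraction vanishes -/
lemma key1 (hk : IsKillingTensor ginv ℓ k) (u w : Fin n → ℝ) (x : Fin n → ℝ) :
    DvIter (ℓ+1) (gt ginv w) (Pc k u) x = 0 := by
  classical
  set u' := gt ginv u with hu'
  set w' := gt ginv w with hw'
  set Q : ℕ → (Fin n → ℝ) → ℝ := Qc k u w with hQ
  have smQ : ∀ m, Sm (Q m) := fun m => sm_Qc k hk.1 u w m
  -- the polynomial identity in t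
  have hpoly : ∀ (t : ℝ) (y : Fin n → ℝ),
      (∑ m ∈ Finset.range (ℓ+1),
        (t^m * Dv u' (Q m) y + t^(m+1) * Dv w' (Q m) y)) = 0 := by
    intro t y
    have hK := killing_contract ginv k hk (u + t • w) y
    have hgt : gt ginv (u + t • w) = fun b => u' b + t * w' b := by
      funext b
      show ∑ a, (u a + t * w a) * ginv a b = _
      rw [hu', hw']
      show _ = (∑ a, u a * ginv a b) + t * ∑ a, w a * ginv a b
      rw [Finset.mul_sum, ← Finset.sum_add_distrib]
      exact Finset.sum_congr rfl fun a _ => by ring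
    have hPfun : Pc k (u + t • w)
        = fun z => ∑ m ∈ Finset.range (ℓ+1), t^m * Q m z :=
      funext fun z => Pc_expand k u w t z
    rw [hgt, hPfun] at hK
    have hDv : ∀ v : Fin n → ℝ,
        Dv v (fun z => ∑ m ∈ Finset.range (ℓ+1), t^m * Q m z) y
        = ∑ m ∈ Finset.range (ℓ+1), t^m * Dv v (Q m) y := by
      intro v
      rw [Dv_sum (Finset.range (ℓ+1)) (fun m => fun z => t^m * Q m z)
        (fun m _ => (contDiff_const.mul (smQ m)).differentiable (by simp)) v]
      exact Finset.sum_congr rfl fun m _ => by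
        rw [Dv_const_mul _ (sm_diff (smQ m))]
    rw [Dv_add_vec u' w' t _ y, hDv u', hDv w'] at hK
    rw [Finset.sum_add_distrib]
    rw [Finset.mul_sum] at hK
    rw [← hK]
    congr 1
    exact Finset.sum_congr rfl fun m _ => by ring
  -- extract coefficient relations via polynomial identity
  have hrel : ∀ (y : Fin n → ℝ),
      (Dv w' (Q ℓ) y = 0) ∧
      (∀ j, j < ℓ → Dv u' (Q (j+1)) y + Dv w' (Q j) y = 0) := by
    intro y
    set A : ℕ → ℝ := fun m => Dv u' (Q m) y with hA
    set B : ℕ → ℝ := fun m => Dv w' (Q m) y with hB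
    set pol : Polynomial ℝ := ∑ m ∈ Finset.range (ℓ+1),
      (Polynomial.C (A m) * Polynomial.X^m + Polynomial.C (B m) * Polynomial.X^(m+1)) with hpol
    have hev : ∀ t : ℝ, pol.eval t = 0 := by
      intro t
      rw [hpol, Polynomial.eval_finset_sum]
      rw [← hpoly t y]
      refine Finset.sum_congr rfl fun m _ => ?_
      rw [Polynomial.eval_add, Polynomial.eval_mul, Polynomial.eval_mul, Polynomial.eval_C,
        Polynomial.eval_C, Polynomial.eval_pow, Polynomial.eval_pow, Polynomial.eval_X]
      ring
    have hpol0 : pol = 0 := Polynomial.funext fun t => by rw [hev t]; simp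
    have hcoeff : ∀ c : ℕ, (∑ m ∈ Finset.range (ℓ+1),
        ((if c = m then A m else 0) + (if c = m+1 then B m else 0))) = 0 := by
      intro c
      have := congrArg (fun q => Polynomial.coeff q c) hpol0
      simp only [hpol, Polynomial.finset_sum_coeff, Polynomial.coeff_add,
        Polynomial.coeff_C_mul, Polynomial.coeff_X_pow, Polynomial.coeff_zero,
        mul_ite, mul_one, mul_zero] at this
      exact this
    constructor
    · have h := hcoeff (ℓ+1)
      have hstep : ∀ m ∈ Finset.range (ℓ+1),
          ((if ℓ+1 = m then A m else 0) + (if ℓ+1 = m+1 then B m else 0))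
          = if ℓ = m then B m else 0 := by
        intro m hm
        rw [Finset.mem_range] at hm
        rw [if_neg (by omega : ¬ ℓ+1 = m), zero_add]
        by_cases hx : ℓ = m
        · rw [if_pos (by omega : ℓ+1 = m+1), if_pos hx]
        · rw [if_neg (by omega : ¬ ℓ+1 = m+1), if_neg hx]
      rw [Finset.sum_congr rfl hstep, Finset.sum_ite_eq (Finset.range (ℓ+1)) ℓ B,
        if_pos (Finset.mem_range.mpr (by omega))] at h
      exact h
    · intro j hj
      have h := hcoeff (j+1)
      have hstep : ∀ m ∈ Finset.range (ℓ+1),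
          ((if j+1 = m then A m else 0) + (if j+1 = m+1 then B m else 0))
          = (if j+1 = m then A m else 0) + (if j = m then B m else 0) := by
        intro m _
        congr 1
        by_cases hx : j = m
        · rw [if_pos (by omega : j+1 = m+1), if_pos hx]
        · rw [if_neg (by omega : ¬ j+1 = m+1), if_neg hx]
      rw [Finset.sum_congr rfl hstep, Finset.sum_add_distrib,
        Finset.sum_ite_eq (Finset.range (ℓ+1)) (j+1) A,
        if_pos (Finset.mem_range.mpr (by omega)),
        Finset.sum_ite_eq (Finset.range (ℓ+1)) j B,
        if_pos (Finset.mem_range.mpr (by omega))] at h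
      exact h
  -- downward induction
  have main : ∀ r, r ≤ ℓ → ∀ y, DvIter (r+1) w' (Q (ℓ - r)) y = 0 := by
    intro r
    induction r with
    | zero =>
      intro _ y
      show Dv w' (DvIter 0 w' (Q (ℓ - 0))) y = 0
      rw [Nat.sub_zero]
      exact (hrel y).1
    | succ r IH =>
      intro hr y
      have hr' : r ≤ ℓ := Nat.le_of_succ_le hr
      have hIH : DvIter (r+1) w' (Q (ℓ - r)) = fun _ => 0 := funext (IH hr')
      have hjsucc : (ℓ - (r+1)) + 1 = ℓ - r := by omega
      have hzero : (fun z => Dv u' (Q (ℓ - r)) z + Dv w' (Q (ℓ - (r+1))) z)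
          = fun _ => (0:ℝ) := by
        funext z
        have h := (hrel z).2 (ℓ - (r+1)) (by omega)
        rw [hjsucc] at h
        exact h
      have happ : DvIter (r+1) w'
          (fun z => Dv u' (Q (ℓ - r)) z + Dv w' (Q (ℓ - (r+1))) z) y = 0 := by
        rw [hzero, DvIter_zero_fun]
      rw [DvIter_add (sm_Dv (smQ _) u') (sm_Dv (smQ _) w') (r+1) w'] at happ
      have h1 : DvIter (r+1) w' (Dv u' (Q (ℓ - r))) y = 0 := by
        rw [DvIter_Dv_comm (smQ _) (r+1) u' w', hIH, Dv_zero_fun]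
      have h2 : DvIter (r+1) w' (Dv w' (Q (ℓ - (r+1)))) y
          = DvIter (r+2) w' (Q (ℓ - (r+1))) y := by
        rw [← DvIter_succ']
      have happ2 : DvIter (r+1) w' (Dv u' (Q (ℓ - r))) y
          + DvIter (r+1) w' (Dv w' (Q (ℓ - (r+1)))) y = 0 := happ
      rw [h1, h2] at happ2
      rw [zero_add] at happ2
      exact happ2
  have := main ℓ le_rfl x
  rw [Nat.sub_self] at this
  rw [hQ] at this
  rw [Qc_zero] at this
  exact this

lemma gt_surjective {g : Matrix (Fin n) (Fin n) ℝ} (hginv : g * ginv = 1) (v : Fin n → ℝ) :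
    ∃ w : Fin n → ℝ, gt ginv w = v := by
  refine ⟨fun a => ∑ c, v c * g c a, ?_⟩
  funext b
  show ∑ a, (∑ c, v c * g c a) * ginv a b = v b
  have h1 : ∀ a, (∑ c, v c * g c a) * ginv a b = ∑ c, v c * (g c a * ginv a b) := by
    intro a
    rw [Finset.sum_mul]
    exact Finset.sum_congr rfl fun c _ => by ring
  rw [Finset.sum_congr rfl fun a _ => h1 a, Finset.sum_comm]
  have h2 : ∀ c, (∑ a, v c * (g c a * ginv a b)) = v c * ((1 : Matrix (Fin n) (Fin n) ℝ) c b) := by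
    intro c
    rw [← Finset.mul_sum]
    congr 1
    rw [← hginv, Matrix.mul_apply]
  rw [Finset.sum_congr rfl fun c _ => h2 c]
  rw [Finset.sum_congr rfl (fun c (_ : c ∈ Finset.univ) => by
    rw [Matrix.one_apply, mul_ite, mul_one, mul_zero])]
  rw [Finset.sum_ite_eq' Finset.univ b v]
  simp

/-- part 1: all partial derivatives of order ℓ+1 vanish -/
lemma part1 {g : Matrix (Fin n) (Fin n) ℝ} (hginv : g * ginv = 1)
    (hk : IsKillingTensor ginv ℓ k) :
    ∀ (b : Fin (ℓ+1) → Fin n) (i : Fin ℓ → Fin n) (x : Fin n → ℝ),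
      pdIter (ℓ+1) b (k i) x = 0 := by
  have hDvAll : ∀ (u v x : Fin n → ℝ), DvIter (ℓ+1) v (Pc k u) x = 0 := by
    intro u v x
    obtain ⟨w, hw⟩ := gt_surjective ginv hginv v
    rw [← hw]
    exact key1 ginv k hk u w x
  have hPc0 : ∀ (u : Fin n → ℝ) (b : Fin (ℓ+1) → Fin n) (x : Fin n → ℝ),
      pdIter (ℓ+1) b (Pc k u) x = 0 := by
    intro u b x
    refine polarization (fun b => pdIter (ℓ+1) b (Pc k u) x) ?_ ?_ b
    · intro σ i
      exact congrFun (pdIter_perm (sm_Pc k hk.1 u) (ℓ+1) σ i) x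
    · intro v
      show ∑ i : Fin (ℓ+1) → Fin n, (∏ j, v (i j)) * pdIter (ℓ+1) i (Pc k u) x = 0
      rw [← DvIter_expand (sm_Pc k hk.1 u) (ℓ+1) v x]
      exact hDvAll u v x
  intro b i x
  refine polarization (fun i => pdIter (ℓ+1) b (k i) x) ?_ ?_ i
  · intro σ i
    have h := hk.2.1 σ i
    show pdIter (ℓ+1) b (k (i ∘ σ)) x = pdIter (ℓ+1) b (k i) x
    rw [h]
  · intro u
    show ∑ i : Fin ℓ → Fin n, (∏ j, u (i j)) * pdIter (ℓ+1) b (k i) x = 0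
    have hexp : pdIter (ℓ+1) b (Pc k u)
        = fun y => ∑ i : Fin ℓ → Fin n, (∏ j, u (i j)) * pdIter (ℓ+1) b (k i) y := by
      have h0 : Pc k u = fun y => ∑ i : Fin ℓ → Fin n,
          (fun i => fun y => (∏ j, u (i j)) * k i y) i y := rfl
      rw [h0, pdIter_sum Finset.univ _ (fun i _ => contDiff_const.mul (hk.1 i)) (ℓ+1) b]
      funext y
      exact Finset.sum_congr rfl fun i _ => by
        rw [pdIter_const_mul _ (hk.1 i) (ℓ+1) b]
    have h2 := hPc0 u b x
    rw [hexp] at h2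
    exact h2

end Killing

/-- 1-D: a smooth function with vanishing N-th derivative is a polynomial of degree < N -/
lemma taylor1d : ∀ (N : ℕ) (h : ℝ → ℝ), ContDiff ℝ (⊤:ℕ∞) h → (∀ t, deriv^[N] h t = 0) →
    ∀ t, h t = ∑ m ∈ Finset.range N, deriv^[m] h 0 / m.factorial * t^m := by
  intro N
  induction N with
  | zero =>
    intro h _ h0 t
    have := h0 t
    simpa using this
  | succ N IH =>
    intro h hsm h0 t
    have hd : ContDiff ℝ (⊤:ℕ∞) (deriv h) := (contDiff_infty_iff_deriv.mp hsm).2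
    have hder : ∀ s, deriv h s
        = ∑ m ∈ Finset.range N, deriv^[m+1] h 0 / m.factorial * s^m := by
      intro s
      have := IH (deriv h) hd (fun t => by
        rw [← Function.iterate_succ_apply]
        exact h0 t) s
      rw [this]
      refine Finset.sum_congr rfl fun m _ => ?_
      rw [Function.iterate_succ_apply]
    set P : ℝ → ℝ := fun s => ∑ m ∈ Finset.range (N+1),
      deriv^[m] h 0 / m.factorial * s^m with hP
    have hPd : ∀ s : ℝ, HasDerivAt P (deriv h s) s := by
      intro s
      have h1 : HasDerivAt (fun s : ℝ => ∑ m ∈ Finset.range (N+1),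
          deriv^[m] h 0 / m.factorial * s^m)
          (∑ m ∈ Finset.range (N+1), deriv^[m] h 0 / m.factorial * (m * s^(m-1))) s :=
        HasDerivAt.fun_sum (fun m _ => (hasDerivAt_pow m s).const_mul _)
      have h2 : (∑ m ∈ Finset.range (N+1), deriv^[m] h 0 / m.factorial * (m * s^(m-1)))
          = deriv h s := by
        rw [Finset.sum_range_succ']
        have hz : deriv^[0] h 0 / (Nat.factorial 0) * ((0:ℕ) * s^(0-1)) = 0 := by
          simp
        rw [hz, add_zero, hder s]
        refine Finset.sum_congr rfl fun m _ => ?_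
        have hfac : ((m+1).factorial : ℝ) = (m+1) * m.factorial := by
          rw [Nat.factorial_succ]
          push_cast
          ring
        rw [hfac, Nat.add_sub_cancel]
        push_cast
        have hm1 : ((m:ℝ)+1) ≠ 0 := by positivity
        have hmf : ((m.factorial : ℝ)) ≠ 0 := by
          exact_mod_cast Nat.factorial_ne_zero m
        field_simp
      rw [← h2]
      exact h1
    have hdiffP : Differentiable ℝ P := fun s => (hPd s).differentiableAt
    have hsub : ∀ s, deriv (fun y => h y - P y) s = 0 := by
      intro s
      have := ((hsm.differentiable (by simp) s).hasDerivAt.sub (hPd s))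
      rw [show (fun y => h y - P y) = h - P from rfl, this.deriv]
      ring
    have hconst := is_const_of_deriv_eq_zero ((hsm.differentiable (by simp)).sub hdiffP) hsub t 0
    have hP0 : P 0 = h 0 := by
      show ∑ m ∈ Finset.range (N+1), deriv^[m] h 0 / (m.factorial : ℝ) * (0:ℝ)^m = h 0
      rw [Finset.sum_eq_single 0]
      · simp
      · intro m _ hm
        have : (0:ℝ)^m = 0 := zero_pow hm
        rw [this, mul_zero]
      · intro habs
        exact absurd (Finset.mem_range.mpr (by omega)) habs
    have : h t - P t = h 0 - P 0 := hconst
    rw [hP0] at this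
    have : h t = P t := by linarith
    rw [this]

lemma deriv_line {F : (Fin n → ℝ) → ℝ} (hf : Sm F) (x : Fin n → ℝ) :
    ∀ (m : ℕ) (t : ℝ), deriv^[m] (fun s => F (s • x)) t
      = ∑ b : Fin m → Fin n, (∏ j, x (b j)) * pdIter m b F (t • x) := by
  intro m
  induction m with
  | zero =>
    intro t
    rw [Fintype.sum_unique]
    simp [pdIter]
  | succ m IH =>
    intro t
    rw [Function.iterate_succ_apply']
    have hfn : deriv^[m] (fun s => F (s • x))
        = fun s => ∑ b : Fin m → Fin n, (∏ j, x (b j)) * pdIter m b F (s • x) :=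
      funext fun s => IH s
    rw [hfn]
    have hterm : ∀ (b : Fin m → Fin n) (s : ℝ),
        HasDerivAt (fun s : ℝ => (∏ j, x (b j)) * pdIter m b F (s • x))
          ((∏ j, x (b j)) * ∑ a, x a * pd a (pdIter m b F) (s • x)) s := by
      intro b s
      have hline : HasDerivAt (fun s : ℝ => s • x) x s := by
        simpa using (hasDerivAt_id s).smul_const x
      have hG : HasDerivAt (fun s : ℝ => pdIter m b F (s • x))
          (fderiv ℝ (pdIter m b F) (s • x) x) s :=
        (sm_diff (sm_pdIter hf m b) (s • x)).hasFDerivAt.comp_hasDerivAt s hline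
      have h2 := hG.const_mul (∏ j, x (b j))
      rw [fderiv_eq_sum] at h2
      exact h2
    have hsum : HasDerivAt
        (fun s => ∑ b : Fin m → Fin n, (∏ j, x (b j)) * pdIter m b F (s • x))
        (∑ b : Fin m → Fin n, (∏ j, x (b j)) * ∑ a, x a * pd a (pdIter m b F) (t • x)) t :=
      HasDerivAt.fun_sum fun b _ => hterm b t
    rw [hsum.deriv]
    calc ∑ b : Fin m → Fin n, (∏ j, x (b j)) * ∑ a, x a * pd a (pdIter m b F) (t • x)
        = ∑ a, ∑ b : Fin m → Fin n,
            x a * ((∏ j, x (b j)) * pdIter (m+1) (Fin.cons a b) F (t • x)) := by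
          rw [Finset.sum_congr rfl (fun b (_ : b ∈ Finset.univ) => Finset.mul_sum
            Finset.univ (fun a => x a * pd a (pdIter m b F) (t • x)) (∏ j, x (b j)))]
          rw [Finset.sum_comm]
          refine Finset.sum_congr rfl fun a _ => Finset.sum_congr rfl fun b _ => ?_
          rw [← pdIter_cons m a b F]
          ring
      _ = ∑ p : Fin n × (Fin m → Fin n),
            (∏ j, x ((Fin.cons p.1 p.2 : Fin (m+1) → Fin n) j))
              * pdIter (m+1) (Fin.cons p.1 p.2) F (t • x) := by
          rw [Fintype.sum_prod_type]
          refine Finset.sum_congr rfl fun a _ => Finset.sum_congr rfl fun b _ => ?_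
          rw [Fin.prod_univ_succ]
          have h0 : (Fin.cons a b : Fin (m+1) → Fin n) 0 = a := rfl
          have hsucc : (fun j : Fin m => (Fin.cons a b : Fin (m+1) → Fin n) j.succ) = b := by
            funext j; simp
          have hps : ∏ j : Fin m, x ((Fin.cons a b : Fin (m+1) → Fin n) j.succ)
              = ∏ j : Fin m, x (b j) := Finset.prod_congr rfl fun j _ => by simp
          rw [h0, hps]
          ring
      _ = ∑ c : Fin (m+1) → Fin n, (∏ j, x (c j)) * pdIter (m+1) c F (t • x) :=
          Fintype.sum_equiv (Fin.consEquiv fun _ => Fin n) _ _ (fun p => rfl)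

/-- part 2: a smooth function with vanishing derivatives of order ℓ+1 is a polynomial of
total degree at most ℓ -/
lemma part2 {f : (Fin n → ℝ) → ℝ} (hf : Sm f) {ℓ : ℕ}
    (hvan : ∀ (b : Fin (ℓ+1) → Fin n) (y : Fin n → ℝ), pdIter (ℓ+1) b f y = 0) :
    ∃ p : MvPolynomial (Fin n) ℝ, p.totalDegree ≤ ℓ ∧ ∀ x, f x = MvPolynomial.eval x p := by
  classical
  refine ⟨∑ m ∈ Finset.range (ℓ+1), ∑ b : Fin m → Fin n,
    MvPolynomial.C (pdIter m b f 0 / m.factorial) * ∏ j, MvPolynomial.X (b j), ?_, ?_⟩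
  · refine le_trans (MvPolynomial.totalDegree_finset_sum _ _) ?_
    rw [Finset.sup_le_iff]
    intro m hm
    refine le_trans (MvPolynomial.totalDegree_finset_sum _ _) ?_
    rw [Finset.sup_le_iff]
    intro b _
    refine le_trans (MvPolynomial.totalDegree_mul _ _) ?_
    rw [MvPolynomial.totalDegree_C, zero_add]
    refine le_trans (MvPolynomial.totalDegree_finset_prod _ _) ?_
    refine le_trans (le_of_eq (Finset.sum_congr rfl fun j _ =>
      MvPolynomial.totalDegree_X (R := ℝ) (b j))) ?_
    rw [Finset.sum_const, Finset.card_univ, Fintype.card_fin, smul_eq_mul, mul_one]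
    rw [Finset.mem_range] at hm
    omega
  · intro x
    have hgsm : ContDiff ℝ (⊤:ℕ∞) (fun s : ℝ => f (s • x)) :=
      hf.comp (contDiff_id.smul contDiff_const)
    have hvan' : ∀ t, deriv^[ℓ+1] (fun s : ℝ => f (s • x)) t = 0 := by
      intro t
      rw [deriv_line hf x (ℓ+1) t]
      exact Finset.sum_eq_zero fun b _ => by rw [hvan b _, mul_zero]
    have ht := taylor1d (ℓ+1) _ hgsm hvan' 1
    have h1 : f ((1:ℝ) • x) = f x := by rw [one_smul]
    rw [h1] at ht
    rw [ht]
    rw [map_sum]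
    refine Finset.sum_congr rfl fun m hm => ?_
    rw [map_sum]
    rw [deriv_line hf x m 0]
    rw [show ((0:ℝ) • x) = (0 : Fin n → ℝ) from zero_smul ℝ x]
    rw [one_pow, mul_one, Finset.sum_div]
    refine Finset.sum_congr rfl fun b _ => ?_
    rw [MvPolynomial.eval_mul, MvPolynomial.eval_C, MvPolynomial.eval_prod]
    rw [show (∏ j, MvPolynomial.eval x (MvPolynomial.X (b j))) = ∏ j, x (b j)
      from Finset.prod_congr rfl fun j _ => MvPolynomial.eval_X _]
    ring

end Aux

/-- all partial derivatives of order `ℓ+1` of the components of a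
Killing `ℓ`-tensor on `ℝⁿ` vanish identically; equivalently, each component is
(the evaluation of) a polynomial of total degree at most `ℓ`. -/
theorem stmt6 {n ℓ : ℕ} (hn : 0 < n)
    (g ginv : Matrix (Fin n) (Fin n) ℝ) (hgsym : g.IsSymm) (hginv : g * ginv = 1)
    (k : (Fin ℓ → Fin n) → (Fin n → ℝ) → ℝ) (hk : IsKillingTensor ginv ℓ k) :
    (∀ (b : Fin (ℓ + 1) → Fin n) (i : Fin ℓ → Fin n) (x : Fin n → ℝ),
      pdIter (ℓ + 1) b (k i) x = 0) ∧
    (∀ i : Fin ℓ → Fin n, ∃ p : MvPolynomial (Fin n) ℝ,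
      p.totalDegree ≤ ℓ ∧ ∀ x, k i x = MvPolynomial.eval x p) := by
  constructor
  · exact part1 ginv k hginv hk
  · intro i
    exact part2 (hk.1 i) (fun b y => part1 ginv k hginv hk b i y)
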